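/- For every n = 0, 1, 2, …, (n+2) ∫₀^∞ h(v)^{n+1} dv ≥ α^{n+2}; equivalently, b_n ≥ 2/(1 + γ_s²) where b_n = 2(n+2) ∫₀^∞ h(v)^{n+1} dv / (α^{n+2}(1 + γ_s²)). (The lower estimate on Sathe's coefficients b_n, which yields the lower bound of formula (1.3); it follows since h is convex with h(0) = α and h'(t) ≥ −1, so h(t) ≥ max(α − t, 0).) -/

import Mathlib

open MeasureTheory Real Set Filter

set_option maxHeartbeats 1000000

/-- Lower estimate on Sathe's coefficients: for every `n`,
`(n+2) ∫₀^∞ h(v)^{n+1} dv ≥ α^{n+2}`, equivalently `b_n ≥ 2/(1+γ_s²)`. -/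
theorem sathe_coefficients_lower_estimate
    (G : ℝ → ℝ)
    (hmono : Monotone G)
    (hrc : ∀ v : ℝ, ContinuousWithinAt G (Set.Ici v) v)
    (hneg : ∀ v : ℝ, v < 0 → G v = 0)
    (hlim : Tendsto G atTop (nhds 1))
    (α μ₂ γ2 : ℝ)
    (hInt1 : IntegrableOn (fun v => 1 - G v) (Ioi 0))
    (hα : α = ∫ v in Ioi (0:ℝ), (1 - G v))
    (hαpos : 0 < α)
    (hInt2 : IntegrableOn (fun v => v * (1 - G v)) (Ioi 0))
    (hμ₂ : μ₂ = 2 * ∫ v in Ioi (0:ℝ), v * (1 - G v))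
    (hγ : γ2 = μ₂ / α ^ 2 - 1)
    (h : ℝ → ℝ)
    (hh : ∀ t : ℝ, h t = ∫ v in Ioi t, (1 - G v))
    (b : ℕ → ℝ)
    (hb : ∀ n : ℕ, b n =
      2 * (n + 2) * (∫ v in Ioi (0:ℝ), (h v) ^ (n + 1)) / (α ^ (n + 2) * (1 + γ2))) :
    ∀ n : ℕ,
      α ^ (n + 2) ≤ ((n : ℝ) + 2) * (∫ v in Ioi (0:ℝ), (h v) ^ (n + 1)) ∧ 2 / (1 + γ2) ≤ b n := by
  set f : ℝ → ℝ := fun v => 1 - G v with hf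
  -- basic facts about G and f
  have hGle : ∀ v, G v ≤ 1 := fun v => hmono.ge_of_tendsto hlim v
  have hG0 : ∀ v, 0 ≤ G v := by
    intro v
    rcases lt_or_ge v 0 with hv | hv
    · exact (hneg v hv).ge
    · calc (0:ℝ) = G (-1) := (hneg (-1) (by norm_num)).symm
        _ ≤ G v := hmono (by linarith)
  have hfnn : ∀ v, 0 ≤ f v := fun v => by simp [hf]; linarith [hGle v]
  have hfle1 : ∀ v, f v ≤ 1 := fun v => by simp [hf]; exact hG0 v
  have hGmeas : Measurable G := hmono.measurable
  have hfmeas : Measurable f := measurable_const.sub hGmeas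
  -- integrability of f on every Ioi t
  have hIntAll : ∀ t : ℝ, IntegrableOn f (Ioi t) := by
    intro t
    rcases le_or_gt 0 t with ht | ht
    · exact hInt1.mono_set (Ioi_subset_Ioi ht)
    · have h1 : IntegrableOn f (Ioc t 0) := by
        apply Measure.integrableOn_of_bounded (M := 1)
        · exact (measure_Ioc_lt_top).ne
        · exact hfmeas.aestronglyMeasurable
        · exact ae_of_all _ fun v => by
            rw [Real.norm_eq_abs, abs_of_nonneg (hfnn v)]; exact hfle1 v
      have : Ioi t ⊆ Ioc t 0 ∪ Ioi 0 := by
        intro v hv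
        rcases le_or_gt v 0 with h0 | h0
        · exact Or.inl ⟨hv, h0⟩
        · exact Or.inr h0
      exact (h1.union hInt1).mono_set this
  -- h is antitone and nonnegative
  have hanti : Antitone h := by
    intro s t hst
    rw [hh s, hh t]
    exact setIntegral_mono_set (hIntAll s) (ae_of_all _ hfnn)
      (HasSubset.Subset.eventuallyLE (Ioi_subset_Ioi hst))
  have hhnn : ∀ t, 0 ≤ h t := fun t => by
    rw [hh t]; exact setIntegral_nonneg measurableSet_Ioi fun v _ => hfnn v
  have hh0 : h 0 = α := by rw [hh 0, hα]
  -- key integrability: h is integrable on Ioi 0 (Fubini/Tonelli)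
  have key : ∫⁻ t in Ioi (0:ℝ), ENNReal.ofReal (h t) < ⊤ := by
    set fE : ℝ → ENNReal := fun v => ENNReal.ofReal (f v) with hfE
    have e1 : ∀ t ∈ Ioi (0:ℝ), ENNReal.ofReal (h t) = ∫⁻ v in Ioi t, fE v := by
      intro t _
      rw [hh t]
      exact ofReal_integral_eq_lintegral_ofReal (hIntAll t) (ae_of_all _ hfnn)
    rw [setLIntegral_congr_fun measurableSet_Ioi e1]
    set F : ℝ × ℝ → ENNReal := fun p => if 0 < p.1 ∧ p.1 < p.2 then fE p.2 else 0 with hF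
    have measF : Measurable F := by
      apply Measurable.ite
      · exact (measurableSet_lt measurable_const measurable_fst).inter
          (measurableSet_lt measurable_fst measurable_snd)
      · exact (ENNReal.measurable_ofReal.comp hfmeas).comp measurable_snd
      · exact measurable_const
    have swap : (∫⁻ t, ∫⁻ v, F (t, v)) = ∫⁻ v, ∫⁻ t, F (t, v) :=
      lintegral_lintegral_swap measF.aemeasurable
    have hL : (∫⁻ t in Ioi (0:ℝ), ∫⁻ v in Ioi t, fE v) = ∫⁻ t, ∫⁻ v, F (t, v) := by
      rw [← lintegral_indicator measurableSet_Ioi]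
      congr 1; ext t
      by_cases ht : (0:ℝ) < t
      · rw [indicator_of_mem (mem_Ioi.mpr ht), ← lintegral_indicator measurableSet_Ioi]
        congr 1; ext v
        by_cases hv : t < v
        · simp [hF, ht, hv]
        · simp [hF, hv]
      · rw [indicator_of_notMem (by simpa using ht)]
        symm
        simp [hF, ht]
    have hR : (∫⁻ v, ∫⁻ t, F (t, v)) = ∫⁻ v in Ioi (0:ℝ), ENNReal.ofReal (v * f v) := by
      rw [← lintegral_indicator measurableSet_Ioi]
      congr 1; ext v
      have inner : ∀ t, F (t, v) = (Ioo (0:ℝ) v).indicator (fun _ => fE v) t := by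
        intro t
        by_cases h1 : 0 < t ∧ t < v
        · simp [hF, h1, indicator_of_mem (mem_Ioo.mpr h1)]
        · simp [hF, h1, indicator_of_notMem (show t ∉ Ioo 0 v by simpa [mem_Ioo] using h1)]
      calc (∫⁻ t, F (t, v)) = ∫⁻ t, (Ioo (0:ℝ) v).indicator (fun _ => fE v) t :=
            lintegral_congr inner
        _ = ∫⁻ _ in Ioo (0:ℝ) v, fE v := lintegral_indicator measurableSet_Ioo _
        _ = fE v * volume (Ioo (0:ℝ) v) := setLIntegral_const _ _
        _ = (Ioi (0:ℝ)).indicator (fun v => ENNReal.ofReal (v * f v)) v := by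
            by_cases hv : (0:ℝ) < v
            · rw [indicator_of_mem (mem_Ioi.mpr hv), Real.volume_Ioo, hfE]
              rw [← ENNReal.ofReal_mul (hfnn v), sub_zero, mul_comm]
            · rw [indicator_of_notMem (by simpa using hv), Ioo_eq_empty (by simpa using hv)]
              simp
    have hfin : ∫⁻ v in Ioi (0:ℝ), ENNReal.ofReal (v * f v) < ⊤ := by
      have h2 := hInt2.2
      rwa [hasFiniteIntegral_iff_ofReal (by
        filter_upwards [ae_restrict_mem measurableSet_Ioi] with v hv
        exact mul_nonneg (le_of_lt hv) (hfnn v))] at h2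
    rw [hL, swap, hR]
    exact hfin
  have hIntH : IntegrableOn h (Ioi 0) := by
    refine ⟨hanti.measurable.aestronglyMeasurable, ?_⟩
    rw [hasFiniteIntegral_iff_ofReal (ae_of_all _ hhnn)]
    exact key
  intro n
  -- integrability of h^(n+1) on Ioi 0
  have hle_α : ∀ t, 0 ≤ t → h t ≤ α := fun t ht => hh0 ▸ hanti ht
  have hIntPow : IntegrableOn (fun v => (h v) ^ (n + 1)) (Ioi 0) := by
    apply Integrable.mono' (hIntH.const_mul (α ^ n))
    · exact (hanti.measurable.pow_const _).aestronglyMeasurable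
    · filter_upwards [ae_restrict_mem measurableSet_Ioi] with v hv
      rw [Real.norm_eq_abs, abs_of_nonneg (pow_nonneg (hhnn v) _), pow_succ]
      exact mul_le_mul (pow_le_pow_left₀ (hhnn v) (hle_α v hv.le) n) le_rfl (hhnn v)
        (pow_nonneg hαpos.le n)
  -- pointwise bound h v ≥ α - v on Ioc 0 α
  have hpt : ∀ v ∈ Ioc (0:ℝ) α, α - v ≤ h v := by
    intro v hv
    have hsplit : (∫ x in Ioc 0 v, f x) + ∫ x in Ioi v, f x = α := by
      rw [hα, ← setIntegral_union (Ioc_disjoint_Ioi le_rfl) measurableSet_Ioi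
        (hInt1.mono_set Ioc_subset_Ioi_self) (hIntAll v),
        Ioc_union_Ioi_eq_Ioi hv.1.le]
    have hb1 : (∫ x in Ioc 0 v, f x) ≤ v := by
      calc (∫ x in Ioc 0 v, f x) ≤ ∫ _ in Ioc 0 v, (1:ℝ) :=
            setIntegral_mono_on (hInt1.mono_set Ioc_subset_Ioi_self)
              (integrableOn_const measure_Ioc_lt_top.ne) measurableSet_Ioc
              fun x _ => hfle1 x
        _ = v := by simp [Real.volume_Ioc, ENNReal.toReal_ofReal hv.1.le, hv.1.le]
    rw [hh v]
    linarith [hsplit]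
  -- main integral inequality
  have hmain : α ^ (n + 2) ≤ ((n : ℝ) + 2) * (∫ v in Ioi (0:ℝ), (h v) ^ (n + 1)) := by
    have step1 : (∫ v in Ioc (0:ℝ) α, (α - v) ^ (n + 1)) ≤ ∫ v in Ioc (0:ℝ) α, (h v) ^ (n + 1) := by
      apply setIntegral_mono_on
      · exact (Continuous.integrableOn_Ioc (by continuity))
      · exact hIntPow.mono_set Ioc_subset_Ioi_self
      · exact measurableSet_Ioc
      · intro v hv
        exact pow_le_pow_left₀ (by linarith [hv.2]) (hpt v hv) _
    have step2 : (∫ v in Ioc (0:ℝ) α, (h v) ^ (n + 1)) ≤ ∫ v in Ioi (0:ℝ), (h v) ^ (n + 1) := by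
      apply setIntegral_mono_set hIntPow
      · exact ae_of_all _ fun v => pow_nonneg (hhnn v) _
      · exact HasSubset.Subset.eventuallyLE Ioc_subset_Ioi_self
    have hval : (∫ v in Ioc (0:ℝ) α, (α - v) ^ (n + 1)) = α ^ (n + 2) / ((n : ℝ) + 2) := by
      rw [← intervalIntegral.integral_of_le hαpos.le]
      have := intervalIntegral.integral_comp_sub_left (fun x => x ^ (n + 1)) α (a := 0) (b := α)
      simp only [sub_self, sub_zero] at this
      rw [this, integral_pow]
      push_cast
      ring
    have hn2 : (0:ℝ) < (n : ℝ) + 2 := by positivity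
    rw [← div_le_iff₀' hn2]
    calc α ^ (n + 2) / ((n : ℝ) + 2) = ∫ v in Ioc (0:ℝ) α, (α - v) ^ (n + 1) := hval.symm
      _ ≤ ∫ v in Ioc (0:ℝ) α, (h v) ^ (n + 1) := step1
      _ ≤ ∫ v in Ioi (0:ℝ), (h v) ^ (n + 1) := step2
  refine ⟨hmain, ?_⟩
  -- positivity of μ₂ hence of 1 + γ2
  have hμ₂pos : 0 < μ₂ := by
    rw [hμ₂]
    have hα' : 0 < ∫ v in Ioi (0:ℝ), f v := hα ▸ hαpos
    rw [setIntegral_pos_iff_support_of_nonneg_ae (ae_of_all _ hfnn)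
      hInt1] at hα'
    have hpos : 0 < ∫ v in Ioi (0:ℝ), v * f v := by
      rw [setIntegral_pos_iff_support_of_nonneg_ae
        (by filter_upwards [ae_restrict_mem measurableSet_Ioi] with v hv;
            exact mul_nonneg hv.le (hfnn v)) hInt2]
      refine lt_of_lt_of_le hα' (measure_mono ?_)
      rintro v ⟨hv1, hv2⟩
      exact ⟨fun hc => hv1 (by
        rcases mul_eq_zero.mp hc with h0 | h0
        · exact absurd h0 (ne_of_gt hv2)
        · exact h0), hv2⟩
    linarith
  have hγpos : 0 < 1 + γ2 := by
    rw [hγ]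
    have : 0 < μ₂ / α ^ 2 := div_pos hμ₂pos (by positivity)
    linarith
  rw [hb n]
  rw [div_le_div_iff₀ hγpos (by positivity)]
  have hI : α ^ (n + 2) ≤ ((n : ℝ) + 2) * (∫ v in Ioi (0:ℝ), (h v) ^ (n + 1)) := hmain
  nlinarith [hγpos, hI, pow_pos hαpos (n + 2)]
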